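/- Consider a C³ game with a finite user set under a Backward Rewarding Mechanism M[f₁,…,fₙ], and suppose additionally that every strategy set Sᵢ is finite and nonempty. Then every global maximizer of the potential P(s) = Σ_{x∈X} Σ_{k=1}^{n} ∫₀^{σ_{(k)}(x)} f_k(t) dt − Σᵢ cᵢ(sᵢ) is a pure Nash equilibrium; in particular, the game admits a pure Nash equilibrium. -/

import Mathlib

open MeasureTheory

/-- A score vector is "sorted" if it is nonincreasing and takes values in `[0,1]`. -/
def SortedScores (n : ℕ) (σ : Fin n → ℝ) : Prop :=
  (∀ i j : Fin n, i ≤ j → σ j ≤ σ i) ∧ ∀ i, σ i ∈ Set.Icc (0:ℝ) 1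

/-- The sorted score vector consisting of `k` ones followed by zeros. -/
def onesVec (n k : ℕ) : Fin n → ℝ := fun i => if (i : ℕ) < k then 1 else 0

/-- The defining hypotheses on the family `f₁, …, fₙ` of a Backward Rewarding
Mechanism: each `f k` is integrable on `[0,1]`, nonnegative on `[0,1]`,
pointwise nonincreasing in the index `k`, and `f₁ > 0` on `[0,1]`. -/
def BRMHyp {n : ℕ} (f : Fin n → ℝ → ℝ) : Prop :=
  (∀ k, IntervalIntegrable (f k) volume 0 1) ∧
  (∀ k, ∀ t ∈ Set.Icc (0:ℝ) 1, 0 ≤ f k t) ∧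
  (∀ k k' : Fin n, k ≤ k' → ∀ t ∈ Set.Icc (0:ℝ) 1, f k' t ≤ f k t) ∧
  (∀ k : Fin n, (k : ℕ) = 0 → ∀ t ∈ Set.Icc (0:ℝ) 1, 0 < f k t)

/-- `σ_{k+1}`, with the convention `σ_{n+1} = 0`. -/
def nextVal {n : ℕ} (σ : Fin n → ℝ) (k : Fin n) : ℝ :=
  if h : (k : ℕ) + 1 < n then σ ⟨(k : ℕ) + 1, h⟩ else 0

/-- The BRM reward of the creator at (0-indexed) rank `p` of the nonincreasing score
vector `σ`: `∑_{k ≥ p} ∫_{σ_{k+1}}^{σ_k} f_k(t) dt`. -/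
noncomputable def brmRankedN {n : ℕ} (f : Fin n → ℝ → ℝ) (σ : Fin n → ℝ) (p : ℕ) : ℝ :=
  ∑ k : Fin n, if p ≤ (k : ℕ) then ∫ t in (nextVal σ k)..(σ k), f k t else 0

/-- The BRM reward of the creator holding the `i`-th largest score of the
nonincreasing score vector `σ` (0-indexed). -/
noncomputable def brmRanked {n : ℕ} (f : Fin n → ℝ → ℝ) (σ : Fin n → ℝ) (i : Fin n) : ℝ :=
  brmRankedN f σ (i : ℕ)

/-- The nonincreasing rearrangement of an arbitrary score vector:
`sortDesc σ k` is the `k`-th largest entry of `σ` (0-indexed). -/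
noncomputable def sortDesc {n : ℕ} (σ : Fin n → ℝ) : Fin n → ℝ :=
  fun k => σ (Tuple.sort σ k.rev)

/-- The (0-indexed) rank of creator `i` in the score vector `σ`, ties broken by index. -/
noncomputable def rankCount {n : ℕ} (σ : Fin n → ℝ) (i : Fin n) : ℕ :=
  (Finset.univ.filter fun j => σ i < σ j ∨ (σ i = σ j ∧ j < i)).card

/-- Creator `i`'s BRM reward on an arbitrary score vector `σ ∈ [0,1]ⁿ`. -/
noncomputable def brmRewardAt {n : ℕ} (f : Fin n → ℝ → ℝ) (σ : Fin n → ℝ) (i : Fin n) : ℝ :=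
  brmRankedN f (sortDesc σ) (rankCount σ i)

/-- The BRM potential `Φ(σ) = ∑_k ∫₀^{σ_(k)} f_k(t) dt`. -/
noncomputable def brmPotential {n : ℕ} (f : Fin n → ℝ → ℝ) (σ : Fin n → ℝ) : ℝ :=
  ∑ k : Fin n, ∫ t in (0:ℝ)..(sortDesc σ k), f k t

/-- Creator `i`'s utility in a C³ game with finite user set `U` under the mechanism with
per-user rewards `brmRewardAt f`: total reward over all users minus the production cost. -/
noncomputable def c3Utility {n : ℕ} {U : Type*} [Fintype U] (f : Fin n → ℝ → ℝ)
    (S : Fin n → Type*) (score : ∀ i, S i → U → ℝ) (c : ∀ i, S i → ℝ)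
    (s : ∀ i, S i) (i : Fin n) : ℝ :=
  (∑ x : U, brmRewardAt f (fun j => score j (s j) x) i) - c i (s i)

/-- The potential `P(s) = ∑_x ∑_k ∫₀^{σ_(k)(x)} f_k(t) dt − ∑_i c_i(s_i)`. -/
noncomputable def c3Potential {n : ℕ} {U : Type*} [Fintype U] (f : Fin n → ℝ → ℝ)
    (S : Fin n → Type*) (score : ∀ i, S i → U → ℝ) (c : ∀ i, S i → ℝ)
    (s : ∀ i, S i) : ℝ :=
  (∑ x : U, brmPotential f (fun j => score j (s j) x)) - ∑ i, c i (s i)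

-- auxiliary counting functions
noncomputable def Ncount {n : ℕ} (σ : Fin n → ℝ) (t : ℝ) : ℕ :=
  (Finset.univ.filter fun j => t < σ j).card

noncomputable def Mcount {n : ℕ} (σ : Fin n → ℝ) (i : Fin n) (t : ℝ) : ℕ :=
  (Finset.univ.filter fun j => j ≠ i ∧ t < σ j).card

lemma Ncount_le {n : ℕ} (σ : Fin n → ℝ) (t : ℝ) : Ncount σ t ≤ n := by
  classical
  simpa [Ncount] using Finset.card_filter_le Finset.univ (fun j => t < σ j)

lemma sortDesc_anti {n : ℕ} (σ : Fin n → ℝ) :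
    ∀ k l : Fin n, k ≤ l → sortDesc σ l ≤ sortDesc σ k := by
  intro k l hkl
  exact Tuple.monotone_sort σ (Fin.rev_le_rev.mpr hkl)

lemma Ncount_sortDesc {n : ℕ} (σ : Fin n → ℝ) (t : ℝ) :
    Ncount (sortDesc σ) t = Ncount σ t := by
  classical
  unfold Ncount
  exact Finset.card_equiv (Fin.revPerm.trans (Tuple.sort σ)) (by intro i; simp only [Finset.mem_filter, Finset.mem_univ, true_and]; simp [sortDesc, Fin.revPerm])

lemma lt_sortDesc_iff {n : ℕ} (σ : Fin n → ℝ) (t : ℝ) (k : Fin n) :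
    t < sortDesc σ k ↔ (k : ℕ) < Ncount σ t := by
  classical
  rw [← Ncount_sortDesc]
  constructor
  · intro h
    have hsub : Finset.Iic k ⊆ Finset.univ.filter fun j => t < sortDesc σ j := by
      intro j hj
      simp only [Finset.mem_Iic] at hj
      simp only [Finset.mem_filter, Finset.mem_univ, true_and]
      exact lt_of_lt_of_le h (sortDesc_anti σ j k hj)
    have hcard := Finset.card_le_card hsub
    rw [Fin.card_Iic] at hcard
    unfold Ncount
    omega
  · intro h
    by_contra hc
    push_neg at hc
    have hsub : (Finset.univ.filter fun j => t < sortDesc σ j) ⊆ Finset.Iio k := by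
      intro j hj
      simp only [Finset.mem_filter, Finset.mem_univ, true_and] at hj
      simp only [Finset.mem_Iio]
      by_contra hkj
      push_neg at hkj
      exact absurd hj (not_lt.mpr ((sortDesc_anti σ k j hkj).trans hc))
    have hcard := Finset.card_le_card hsub
    rw [Fin.card_Iio] at hcard
    unfold Ncount at h
    omega

lemma lt_nextVal_iff {n : ℕ} (σ : Fin n → ℝ) {t : ℝ} (ht : 0 ≤ t) (k : Fin n) :
    t < nextVal (sortDesc σ) k ↔ (k : ℕ) + 1 < Ncount σ t := by
  unfold nextVal
  split
  · next h => exact lt_sortDesc_iff σ t ⟨(k : ℕ) + 1, h⟩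
  · next h =>
    push_neg at h
    constructor
    · intro h2; exact absurd h2 (not_lt.mpr ht)
    · intro h2; have := Ncount_le σ t; omega

lemma rank_lt_Ncount_iff {n : ℕ} (σ : Fin n → ℝ) (i : Fin n) (t : ℝ) :
    rankCount σ i < Ncount σ t ↔ t < σ i := by
  classical
  constructor
  · intro h
    by_contra hc
    push_neg at hc
    have hsub : (Finset.univ.filter fun j => t < σ j)
        ⊆ (Finset.univ.filter fun j => σ i < σ j ∨ (σ i = σ j ∧ j < i)) := by
      intro j hj
      simp only [Finset.mem_filter, Finset.mem_univ, true_and] at hj ⊢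
      exact Or.inl (lt_of_le_of_lt hc hj)
    have := Finset.card_le_card hsub
    unfold rankCount Ncount at *
    omega
  · intro h
    have hi : i ∉ (Finset.univ.filter fun j => σ i < σ j ∨ (σ i = σ j ∧ j < i)) := by
      simp
    have hsub : insert i (Finset.univ.filter fun j => σ i < σ j ∨ (σ i = σ j ∧ j < i))
        ⊆ (Finset.univ.filter fun j => t < σ j) := by
      intro j hj
      rcases Finset.mem_insert.mp hj with rfl | hj
      · simpa using h
      · simp only [Finset.mem_filter, Finset.mem_univ, true_and] at hj ⊢
        rcases hj with h1 | ⟨h1, _⟩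
        · exact h.trans h1
        · exact h1 ▸ h
    have hcard := Finset.card_le_card hsub
    rw [Finset.card_insert_of_notMem hi] at hcard
    unfold rankCount Ncount
    omega

lemma Ncount_eq_Mcount {n : ℕ} (σ : Fin n → ℝ) (i : Fin n) (t : ℝ) :
    Ncount σ t = Mcount σ i t + (if t < σ i then 1 else 0) := by
  classical
  unfold Ncount Mcount
  by_cases h : t < σ i
  · rw [if_pos h]
    have hset : (Finset.univ.filter fun j => t < σ j)
        = insert i (Finset.univ.filter fun j => j ≠ i ∧ t < σ j) := by
      ext j
      simp only [Finset.mem_filter, Finset.mem_univ, true_and, Finset.mem_insert]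
      by_cases hji : j = i
      · subst hji; simp [h]
      · simp [hji]
    rw [hset, Finset.card_insert_of_notMem (by simp)]
  · rw [if_neg h, add_zero]
    congr 1
    ext j
    simp only [Finset.mem_filter, Finset.mem_univ, true_and]
    constructor
    · intro hj
      refine ⟨fun hji => h (hji ▸ hj), hj⟩
    · exact fun hj => hj.2

lemma Mcount_congr {n : ℕ} (σ σ' : Fin n → ℝ) (i : Fin n)
    (hag : ∀ j, j ≠ i → σ j = σ' j) (t : ℝ) : Mcount σ i t = Mcount σ' i t := by
  classical
  unfold Mcount
  congr 1
  ext j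
  simp only [Finset.mem_filter, Finset.mem_univ, true_and]
  constructor
  · rintro ⟨hji, hj⟩; exact ⟨hji, (hag j hji) ▸ hj⟩
  · rintro ⟨hji, hj⟩; exact ⟨hji, (hag j hji).symm ▸ hj⟩

-- integration lemmas
lemma intable_ind {g : ℝ → ℝ} (hg : IntervalIntegrable g volume 0 1) (s : ℝ) :
    IntervalIntegrable (fun t => if t < s then g t else 0) volume 0 1 := by
  have heq : (fun t => if t < s then g t else 0) = (Set.Iio s).indicator g := by
    funext t
    simp [Set.indicator_apply]
  rw [heq]
  exact ⟨hg.1.indicator measurableSet_Iio, hg.2.indicator measurableSet_Iio⟩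

lemma integral_ind_eq {g : ℝ → ℝ} (_hg : IntervalIntegrable g volume 0 1) {s : ℝ}
    (hs : s ∈ Set.Icc (0:ℝ) 1) :
    ∫ t in (0:ℝ)..1, (if t < s then g t else 0) = ∫ t in (0:ℝ)..s, g t := by
  have h1 : ∫ t in (0:ℝ)..1, Set.indicator {x | x ≤ s} g t = ∫ t in (0:ℝ)..s, g t :=
    intervalIntegral.integral_indicator hs
  rw [← h1]
  apply intervalIntegral.integral_congr_ae
  have hne : ∀ᵐ x : ℝ ∂volume, x ≠ s := by
    rw [MeasureTheory.ae_iff]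
    have : {x : ℝ | ¬ x ≠ s} = {s} := by ext x; simp
    rw [this]
    exact measure_singleton s
  filter_upwards [hne] with x hx _
  by_cases hxs : x < s
  · simp [hxs, Set.indicator_apply, le_of_lt hxs]
  · have hle : ¬ x ≤ s := fun hle => hxs (lt_of_le_of_ne hle hx)
    simp [hxs, Set.indicator_apply, hle]

lemma intable_sub01 {g : ℝ → ℝ} (hg : IntervalIntegrable g volume 0 1) {s : ℝ}
    (hs : s ∈ Set.Icc (0:ℝ) 1) : IntervalIntegrable g volume 0 s :=
  hg.mono_set (by
    rw [Set.uIcc_of_le hs.1, Set.uIcc_of_le (zero_le_one)]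
    exact Set.Icc_subset_Icc le_rfl hs.2)

lemma reward_term {g : ℝ → ℝ} (hg : IntervalIntegrable g volume 0 1) {a b : ℝ}
    (ha : a ∈ Set.Icc (0:ℝ) 1) (hb : b ∈ Set.Icc (0:ℝ) 1) :
    ∫ t in a..b, g t
      = (∫ t in (0:ℝ)..1, if t < b then g t else 0)
        - (∫ t in (0:ℝ)..1, if t < a then g t else 0) := by
  rw [integral_ind_eq hg hb, integral_ind_eq hg ha]
  exact (intervalIntegral.integral_interval_sub_left (intable_sub01 hg hb)
    (intable_sub01 hg ha)).symm

lemma pot_sub_reward {n : ℕ} (f : Fin n → ℝ → ℝ) (hf : BRMHyp f) (σ : Fin n → ℝ)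
    (hσ : ∀ j, σ j ∈ Set.Icc (0:ℝ) 1) (i : Fin n) :
    brmPotential f σ - brmRewardAt f σ i
      = ∫ t in (0:ℝ)..1, ∑ k : Fin n, if (k : ℕ) < Mcount σ i t then f k t else 0 := by
  classical
  set d := sortDesc σ with hd
  set p := rankCount σ i with hp
  have hdmem : ∀ k, d k ∈ Set.Icc (0:ℝ) 1 := fun k => hσ _
  have hnmem : ∀ k, nextVal d k ∈ Set.Icc (0:ℝ) 1 := by
    intro k
    unfold nextVal
    split
    · exact hdmem _
    · exact Set.mem_Icc.mpr ⟨le_rfl, zero_le_one⟩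
  set g : Fin n → ℝ → ℝ := fun k t => if t < d k then f k t else 0 with hg
  set g' : Fin n → ℝ → ℝ := fun k t => if t < nextVal d k then f k t else 0 with hg'
  set h : Fin n → ℝ → ℝ := fun k t => if p ≤ (k : ℕ) then g k t - g' k t else 0 with hh
  have hgint : ∀ k, IntervalIntegrable (g k) volume 0 1 := fun k => intable_ind (hf.1 k) _
  have hg'int : ∀ k, IntervalIntegrable (g' k) volume 0 1 := fun k => intable_ind (hf.1 k) _
  have hhint : ∀ k, IntervalIntegrable (h k) volume 0 1 := by
    intro k
    by_cases hk : p ≤ (k : ℕ)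
    · have : h k = fun t => g k t - g' k t := by funext t; simp [hh, hk]
      rw [this]
      exact (hgint k).sub (hg'int k)
    · have : h k = fun _ => 0 := by funext t; simp [hh, hk]
      rw [this]
      exact intervalIntegrable_const
  have hP : brmPotential f σ = ∑ k : Fin n, ∫ t in (0:ℝ)..1, g k t := by
    unfold brmPotential
    exact Finset.sum_congr rfl fun k _ => (integral_ind_eq (hf.1 k) (hdmem k)).symm
  have hR : brmRewardAt f σ i = ∑ k : Fin n, ∫ t in (0:ℝ)..1, h k t := by
    unfold brmRewardAt brmRankedN
    refine Finset.sum_congr rfl fun k _ => ?_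
    by_cases hk : p ≤ (k : ℕ)
    · rw [if_pos hk]
      have hsplit : ∫ t in (0:ℝ)..1, h k t
          = (∫ t in (0:ℝ)..1, g k t) - ∫ t in (0:ℝ)..1, g' k t := by
        have : (fun t => h k t) = fun t => g k t - g' k t := by funext t; simp [hh, hk]
        rw [this, intervalIntegral.integral_sub (hgint k) (hg'int k)]
      rw [hsplit]
      exact reward_term (hf.1 k) (hnmem k) (hdmem k)
    · rw [if_neg hk]
      have : (fun t => h k t) = fun _ => (0:ℝ) := by funext t; simp [hh, hk]
      rw [this]
      simp
  rw [hP, hR, ← Finset.sum_sub_distrib]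
  have hsum : ∀ k ∈ Finset.univ, (∫ t in (0:ℝ)..1, g k t) - ∫ t in (0:ℝ)..1, h k t
      = ∫ t in (0:ℝ)..1, (g k t - h k t) :=
    fun k _ => (intervalIntegral.integral_sub (hgint k) (hhint k)).symm
  rw [Finset.sum_congr rfl hsum,
    ← intervalIntegral.integral_finset_sum (fun k _ => (hgint k).sub (hhint k))]
  apply intervalIntegral.integral_congr
  intro t htmem
  rw [Set.uIcc_of_le zero_le_one] at htmem
  obtain ⟨ht0, _⟩ := htmem
  set N := Ncount σ t with hN
  set M := Mcount σ i t with hM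
  have e1 : ∀ k : Fin n, t < d k ↔ (k : ℕ) < N := fun k => lt_sortDesc_iff σ t k
  have e2 : ∀ k : Fin n, t < nextVal d k ↔ (k : ℕ) + 1 < N := fun k => lt_nextVal_iff σ ht0 k
  have e3 : p < N ↔ t < σ i := rank_lt_Ncount_iff σ i t
  have e4 : N = M + (if t < σ i then 1 else 0) := Ncount_eq_Mcount σ i t
  refine Finset.sum_congr rfl fun k _ => ?_
  simp only [hg, hg', hh]
  by_cases hti : t < σ i
  · have hNM : N = M + 1 := by rw [e4, if_pos hti]
    have hpM : p ≤ M := by have := e3.mpr hti; omega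
    rcases lt_trichotomy ((k : ℕ)) M with hkM | hkM | hkM
    · have h1 : t < d k := (e1 k).mpr (by omega)
      have h2 : t < nextVal d k := (e2 k).mpr (by omega)
      simp [h1, h2, hkM, ← hM]
    · have h1 : t < d k := (e1 k).mpr (by omega)
      have h2 : ¬ t < nextVal d k := fun hc => by have := (e2 k).mp hc; omega
      have hpk : p ≤ (k : ℕ) := by omega
      have h3 : ¬ (k : ℕ) < M := by omega
      simp [h1, h2, hpk, h3, ← hM]
    · have h1 : ¬ t < d k := fun hc => by have := (e1 k).mp hc; omega
      have h2 : ¬ t < nextVal d k := fun hc => by have := (e2 k).mp hc; omega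
      have h3 : ¬ (k : ℕ) < M := by omega
      simp [h1, h2, h3, ← hM]
  · have hNM : N = M := by rw [e4, if_neg hti, add_zero]
    have hNp : N ≤ p := by
      by_contra hc
      push_neg at hc
      exact hti (e3.mp hc)
    by_cases hpk : p ≤ (k : ℕ)
    · have h1 : ¬ t < d k := fun hc => by have := (e1 k).mp hc; omega
      have h2 : ¬ t < nextVal d k := fun hc => by have := (e2 k).mp hc; omega
      have h3 : ¬ (k : ℕ) < M := by omega
      simp [h1, h2, h3, hpk, ← hM]
    · by_cases h1 : t < d k
      · have h3 : (k : ℕ) < M := by have := (e1 k).mp h1; omega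
        simp [h1, h3, hpk, ← hM]
      · have h3 : ¬ (k : ℕ) < M := fun hc => h1 ((e1 k).mpr (by omega))
        simp [h1, h3, hpk, ← hM]

lemma user_exact {n : ℕ} (f : Fin n → ℝ → ℝ) (hf : BRMHyp f) (σ σ' : Fin n → ℝ)
    (hσ : ∀ j, σ j ∈ Set.Icc (0:ℝ) 1) (hσ' : ∀ j, σ' j ∈ Set.Icc (0:ℝ) 1) (i : Fin n)
    (hag : ∀ j, j ≠ i → σ j = σ' j) :
    brmRewardAt f σ' i - brmRewardAt f σ i = brmPotential f σ' - brmPotential f σ := by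
  have h1 := pot_sub_reward f hf σ hσ i
  have h2 := pot_sub_reward f hf σ' hσ' i
  have h3 : ∀ t : ℝ, Mcount σ i t = Mcount σ' i t := Mcount_congr σ σ' i hag
  simp_rw [h3] at h1
  linarith

/-- In a C³ game with finite user set under a BRM, if every strategy
set is finite and nonempty then every global maximizer of the potential is a pure Nash
equilibrium; in particular a pure Nash equilibrium exists. -/
theorem stmt11 {n : ℕ} {U : Type*} [Fintype U]
    (S : Fin n → Type*) [∀ i, Fintype (S i)] [∀ i, Nonempty (S i)]
    (score : ∀ i, S i → U → ℝ) (c : ∀ i, S i → ℝ)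
    (hscore : ∀ i a x, score i a x ∈ Set.Icc (0:ℝ) 1)
    (f : Fin n → ℝ → ℝ) (hf : BRMHyp f) :
    (∀ s : ∀ i, S i,
        (∀ s' : ∀ i, S i, c3Potential f S score c s' ≤ c3Potential f S score c s) →
        ∀ (i : Fin n) (s'i : S i),
          c3Utility f S score c (Function.update s i s'i) i ≤ c3Utility f S score c s i) ∧
    ∃ s : ∀ i, S i, ∀ (i : Fin n) (s'i : S i),
        c3Utility f S score c (Function.update s i s'i) i ≤ c3Utility f S score c s i := by
  classical
  have key : ∀ (s : ∀ i, S i) (i : Fin n) (s'i : S i),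
      c3Utility f S score c (Function.update s i s'i) i - c3Utility f S score c s i
        = c3Potential f S score c (Function.update s i s'i) - c3Potential f S score c s := by
    intro s i s'i
    set s' := Function.update s i s'i with hs'
    have hx : ∀ x : U,
        brmRewardAt f (fun j => score j (s' j) x) i - brmRewardAt f (fun j => score j (s j) x) i
          = brmPotential f (fun j => score j (s' j) x)
            - brmPotential f (fun j => score j (s j) x) := by
      intro x
      refine user_exact f hf _ _ (fun j => hscore _ _ _) (fun j => hscore _ _ _) i ?_
      intro j hj
      simp [hs', Function.update_of_ne hj]
    have hc : (∑ j, c j (s' j)) - ∑ j, c j (s j) = c i (s' i) - c i (s i) := by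
      have h1 : ∑ j, c j (s' j)
          = (∑ j ∈ Finset.univ.erase i, c j (s' j)) + c i (s' i) :=
        (Finset.sum_erase_add _ _ (Finset.mem_univ i)).symm
      have h2 : ∑ j, c j (s j)
          = (∑ j ∈ Finset.univ.erase i, c j (s j)) + c i (s i) :=
        (Finset.sum_erase_add _ _ (Finset.mem_univ i)).symm
      have h3 : ∑ j ∈ Finset.univ.erase i, c j (s' j)
          = ∑ j ∈ Finset.univ.erase i, c j (s j) := by
        refine Finset.sum_congr rfl fun j hj => ?_
        rw [hs', Function.update_of_ne (Finset.ne_of_mem_erase hj)]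
      rw [h1, h2, h3]
      ring
    unfold c3Utility c3Potential
    have hsum : (∑ x : U, brmRewardAt f (fun j => score j (s' j) x) i)
        - ∑ x : U, brmRewardAt f (fun j => score j (s j) x) i
          = (∑ x : U, brmPotential f (fun j => score j (s' j) x))
            - ∑ x : U, brmPotential f (fun j => score j (s j) x) := by
      rw [← Finset.sum_sub_distrib, ← Finset.sum_sub_distrib]
      exact Finset.sum_congr rfl fun x _ => hx x
    linarith
  have main : ∀ s : ∀ i, S i,
      (∀ s' : ∀ i, S i, c3Potential f S score c s' ≤ c3Potential f S score c s) →
      ∀ (i : Fin n) (s'i : S i),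
        c3Utility f S score c (Function.update s i s'i) i ≤ c3Utility f S score c s i := by
    intro s hmax i s'i
    have h1 := key s i s'i
    have h2 := hmax (Function.update s i s'i)
    linarith
  refine ⟨main, ?_⟩
  obtain ⟨s, _, hs⟩ := Finset.exists_max_image Finset.univ (c3Potential f S score c)
    ⟨Classical.arbitrary _, Finset.mem_univ _⟩
  exact ⟨s, main s fun s' => hs s' (Finset.mem_univ _)⟩
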